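/- Let Y be a standard normal real random variable, let λ > 0, and let W be a real random variable independent of Y. Then for all x ∈ ℝ and ε ≥ 0, P(|λY² + W − x| ≤ ε) ≤ P(Y² ≤ 2ε/λ). -/

import Mathlib

open MeasureTheory ProbabilityTheory

section Aux

open Set

lemma gauss_pdf_neg (y : ℝ) : gaussianPDF 0 1 (-y) = gaussianPDF 0 1 y := by
  simp [gaussianPDF, gaussianPDFReal, neg_sq]

lemma gauss_Icc_neg (p q : ℝ) :
    ∫⁻ y in Icc (-q) (-p), gaussianPDF 0 1 y = ∫⁻ y in Icc p q, gaussianPDF 0 1 y := by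
  have h := (Measure.measurePreserving_neg (volume : Measure ℝ)).setLIntegral_comp_preimage_emb
    (MeasurableEquiv.neg ℝ).measurableEmbedding (gaussianPDF 0 1) (Icc (-q) (-p))
  simp only [MeasurableEquiv.neg_apply, gauss_pdf_neg] at h
  rw [show (Neg.neg ⁻¹' Icc (-q) (-p) : Set ℝ) = Icc p q by ext y; simp [and_comm]] at h
  exact h.symm

lemma gauss_Icc_shift (a b : ℝ) :
    ∫⁻ y in Icc a b, gaussianPDF 0 1 y = ∫⁻ y in Icc 0 (b - a), gaussianPDF 0 1 (y + a) := by
  have h := (measurePreserving_add_right (volume : Measure ℝ) a).setLIntegral_comp_preimage_emb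
    (measurableEmbedding_addRight a) (gaussianPDF 0 1) (Icc a b)
  simp only [preimage_add_const_Icc, sub_self] at h
  exact h.symm

lemma gauss_pdf_mono {u v : ℝ} (hu : 0 ≤ u) (huv : u ≤ v) :
    gaussianPDF 0 1 v ≤ gaussianPDF 0 1 u := by
  unfold gaussianPDF gaussianPDFReal
  apply ENNReal.ofReal_le_ofReal
  apply mul_le_mul_of_nonneg_left _ (by positivity)
  apply Real.exp_le_exp.mpr
  push_cast
  nlinarith

/-- Key anti-concentration fact: for a standard Gaussian, the probability that `y ^ 2`
lies in any interval of length `δ` is at most the probability that `y ^ 2 ≤ δ`. -/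
lemma gauss_sq_interval_le (δ : ℝ) (hδ : 0 ≤ δ) (c : ℝ) :
    gaussianReal 0 1 {y : ℝ | c ≤ y ^ 2 ∧ y ^ 2 ≤ c + δ} ≤ gaussianReal 0 1 {y : ℝ | y ^ 2 ≤ δ} := by
  rcases le_or_gt c 0 with hc | hc
  · exact measure_mono fun y hy => le_trans hy.2 (by linarith)
  set a := Real.sqrt c with ha_def
  set b := Real.sqrt (c + δ) with hb_def
  set d := Real.sqrt δ with hd_def
  have ha : 0 < a := Real.sqrt_pos.mpr hc
  have hd0 : 0 ≤ d := Real.sqrt_nonneg _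
  have hab : a ≤ b := Real.sqrt_le_sqrt (by linarith)
  have hba : b - a ≤ d := by
    have hb2 : b ^ 2 = c + δ := Real.sq_sqrt (by linarith)
    have ha2 : a ^ 2 = c := Real.sq_sqrt hc.le
    have hd2 : d ^ 2 = δ := Real.sq_sqrt hδ
    nlinarith [Real.sqrt_nonneg (c + δ)]
  have hsub : {y : ℝ | c ≤ y ^ 2 ∧ y ^ 2 ≤ c + δ} ⊆ Icc (-b) (-a) ∪ Icc a b := by
    intro y hy
    have h1 : a ≤ |y| := by
      have := Real.sqrt_le_sqrt hy.1
      rwa [Real.sqrt_sq_eq_abs] at this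
    have h2 : |y| ≤ b := by
      have := Real.sqrt_le_sqrt hy.2
      rwa [Real.sqrt_sq_eq_abs] at this
    rcases le_or_gt 0 y with hy0 | hy0
    · right; rw [abs_of_nonneg hy0] at h1 h2; exact ⟨h1, h2⟩
    · left; rw [abs_of_neg hy0] at h1 h2; constructor <;> linarith
  have happ : ∀ s : Set ℝ, gaussianReal 0 1 s = ∫⁻ y in s, gaussianPDF 0 1 y :=
    fun s => gaussianReal_apply 0 one_ne_zero s
  have hIcc_le : ∫⁻ y in Icc a b, gaussianPDF 0 1 y ≤ ∫⁻ y in Icc 0 d, gaussianPDF 0 1 y := by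
    rw [gauss_Icc_shift a b]
    calc ∫⁻ y in Icc 0 (b - a), gaussianPDF 0 1 (y + a)
        ≤ ∫⁻ y in Icc 0 (b - a), gaussianPDF 0 1 y := by
          apply setLIntegral_mono (measurable_gaussianPDF 0 1)
          intro y hy
          exact gauss_pdf_mono hy.1 (by linarith)
      _ ≤ ∫⁻ y in Icc 0 d, gaussianPDF 0 1 y :=
          lintegral_mono_set (Icc_subset_Icc le_rfl (by linarith))
  have hLHS : gaussianReal 0 1 {y : ℝ | c ≤ y ^ 2 ∧ y ^ 2 ≤ c + δ}
      ≤ 2 * ∫⁻ y in Icc 0 d, gaussianPDF 0 1 y := by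
    calc gaussianReal 0 1 {y : ℝ | c ≤ y ^ 2 ∧ y ^ 2 ≤ c + δ}
        ≤ gaussianReal 0 1 (Icc (-b) (-a) ∪ Icc a b) := measure_mono hsub
      _ ≤ gaussianReal 0 1 (Icc (-b) (-a)) + gaussianReal 0 1 (Icc a b) := measure_union_le _ _
      _ = (∫⁻ y in Icc a b, gaussianPDF 0 1 y) + ∫⁻ y in Icc a b, gaussianPDF 0 1 y := by
          rw [happ, happ, gauss_Icc_neg]
      _ ≤ (∫⁻ y in Icc 0 d, gaussianPDF 0 1 y) + ∫⁻ y in Icc 0 d, gaussianPDF 0 1 y :=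
          add_le_add hIcc_le hIcc_le
      _ = 2 * ∫⁻ y in Icc 0 d, gaussianPDF 0 1 y := (two_mul _).symm
  refine hLHS.trans ?_
  have hset : {y : ℝ | y ^ 2 ≤ δ} = Icc (-d) d := by
    ext y
    simp only [mem_setOf_eq, mem_Icc]
    constructor
    · intro h
      have := Real.sqrt_le_sqrt h
      rw [Real.sqrt_sq_eq_abs] at this
      exact abs_le.mp this
    · intro h
      have : |y| ≤ d := abs_le.mpr h
      calc y ^ 2 = |y| ^ 2 := (sq_abs y).symm
        _ ≤ d ^ 2 := by nlinarith [abs_nonneg y]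
        _ = δ := Real.sq_sqrt hδ
  rw [hset, happ]
  have hsplit : (Icc (-d) d : Set ℝ) = Icc (-d) 0 ∪ Ioc 0 d :=
    (Icc_union_Ioc_eq_Icc (by linarith) hd0).symm
  rw [hsplit, lintegral_union measurableSet_Ioc
    (by rw [Set.disjoint_left]; intro y h1 h2; exact absurd h2.1 (not_lt.mpr h1.2))]
  have e1 : ∫⁻ y in Icc (-d) 0, gaussianPDF 0 1 y = ∫⁻ y in Icc 0 d, gaussianPDF 0 1 y := by
    have := gauss_Icc_neg 0 d
    simpa using this
  have e2 : ∫⁻ y in Ioc 0 d, gaussianPDF 0 1 y = ∫⁻ y in Icc 0 d, gaussianPDF 0 1 y := by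
    apply setLIntegral_congr
    exact Ioc_ae_eq_Icc
  rw [e1, e2, two_mul]

end Aux

open Set

/-- Concentration bound for a shifted scaled chi-square variable: if `Y` is standard
normal, `λ > 0` and `W` is independent of `Y`, then for all `x ∈ ℝ` and `ε ≥ 0`,
`P(|λY² + W − x| ≤ ε) ≤ P(Y² ≤ 2ε/λ)`. -/
theorem scaled_chisq_plus_indep_concentration
    {Ω : Type*} [MeasureSpace Ω] [IsProbabilityMeasure (ℙ : Measure Ω)]
    (Y : Ω → ℝ) (hYmeas : Measurable Y)
    (hYdist : Measure.map Y ℙ = gaussianReal 0 1)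
    (lam : ℝ) (hlam : 0 < lam)
    (W : Ω → ℝ) (hWmeas : Measurable W)
    (hindep : ProbabilityTheory.IndepFun W Y ℙ)
    (x ε : ℝ) (hε : 0 ≤ ε) :
    ℙ {ω | |lam * (Y ω) ^ 2 + W ω - x| ≤ ε} ≤ ℙ {ω | (Y ω) ^ 2 ≤ 2 * ε / lam} := by
  have hmap : Measure.map (fun ω => (W ω, Y ω)) ℙ = (Measure.map W ℙ).prod (Measure.map Y ℙ) :=
    (ProbabilityTheory.indepFun_iff_map_prod_eq_prod_map_map hWmeas.aemeasurable
      hYmeas.aemeasurable).mp hindep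
  set S : Set (ℝ × ℝ) := {p : ℝ × ℝ | |lam * p.2 ^ 2 + p.1 - x| ≤ ε} with hS_def
  have hSmeas : MeasurableSet S := by
    apply measurableSet_le _ measurable_const
    exact (measurable_const.mul (measurable_snd.pow measurable_const)).add measurable_fst
      |>.sub measurable_const |>.abs
  have hRHSmeas : MeasurableSet {y : ℝ | y ^ 2 ≤ 2 * ε / lam} :=
    measurableSet_le (measurable_id.pow measurable_const) measurable_const
  have hpre : {ω | |lam * (Y ω) ^ 2 + W ω - x| ≤ ε} = (fun ω => (W ω, Y ω)) ⁻¹' S := rfl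
  have hWY : Measurable fun ω => (W ω, Y ω) := hWmeas.prodMk hYmeas
  rw [hpre, ← Measure.map_apply hWY hSmeas, hmap, Measure.prod_apply hSmeas]
  have hslice : ∀ w : ℝ, (Measure.map Y ℙ) (Prod.mk w ⁻¹' S)
      ≤ gaussianReal 0 1 {y : ℝ | y ^ 2 ≤ 2 * ε / lam} := by
    intro w
    rw [hYdist]
    have hsub : Prod.mk w ⁻¹' S ⊆
        {y : ℝ | (x - w - ε) / lam ≤ y ^ 2 ∧ y ^ 2 ≤ (x - w - ε) / lam + 2 * ε / lam} := by
      intro y hy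
      simp only [hS_def, mem_preimage, mem_setOf_eq] at hy
      rw [abs_le] at hy
      constructor
      · rw [div_le_iff₀ hlam]; nlinarith [hy.1]
      · rw [← add_div, le_div_iff₀ hlam]; nlinarith [hy.2]
    calc gaussianReal 0 1 (Prod.mk w ⁻¹' S) ≤ gaussianReal 0 1 _ := measure_mono hsub
      _ ≤ gaussianReal 0 1 {y : ℝ | y ^ 2 ≤ 2 * ε / lam} :=
        gauss_sq_interval_le (2 * ε / lam) (by positivity) _
  calc ∫⁻ w, (Measure.map Y ℙ) (Prod.mk w ⁻¹' S) ∂(Measure.map W ℙ)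
      ≤ ∫⁻ _, gaussianReal 0 1 {y : ℝ | y ^ 2 ≤ 2 * ε / lam} ∂(Measure.map W ℙ) :=
        lintegral_mono hslice
    _ = gaussianReal 0 1 {y : ℝ | y ^ 2 ≤ 2 * ε / lam} := by
        have : IsProbabilityMeasure (Measure.map W ℙ) :=
          Measure.isProbabilityMeasure_map hWmeas.aemeasurable
        simp
    _ = ℙ {ω | (Y ω) ^ 2 ≤ 2 * ε / lam} := by
        rw [← hYdist, Measure.map_apply hYmeas hRHSmeas]
        rfl
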